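/- Let G be a matching covered finite simple graph and let ∂(S) be a nontrivial tight cut of G. If G contains no even conformal bicycle, then the graph obtained from G by contracting S to a single vertex also contains no even conformal bicycle. -/

import Mathlib

open SimpleGraph

variable {V : Type*}

/-- A conformal bicycle: two vertex-disjoint cycles whose complement
(in the vertex set) induces a subgraph having a perfect matching. -/
def IsConformalBicycle (G : SimpleGraph V) {a b : V} (c₁ : G.Walk a a) (c₂ : G.Walk b b) : Prop :=
  c₁.IsCycle ∧ c₂.IsCycle ∧ (∀ x ∈ c₁.support, x ∉ c₂.support) ∧
    ∃ M : G.Subgraph, M.IsMatching ∧ M.verts = {v | v ∉ c₁.support ∧ v ∉ c₂.support}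

def HasConformalBicycle (G : SimpleGraph V) : Prop :=
  ∃ (a b : V) (c₁ : G.Walk a a) (c₂ : G.Walk b b), IsConformalBicycle G c₁ c₂

def HasOddConformalBicycle (G : SimpleGraph V) : Prop :=
  ∃ (a b : V) (c₁ : G.Walk a a) (c₂ : G.Walk b b),
    IsConformalBicycle G c₁ c₂ ∧ Odd c₁.length ∧ Odd c₂.length

def HasEvenConformalBicycle (G : SimpleGraph V) : Prop :=
  ∃ (a b : V) (c₁ : G.Walk a a) (c₂ : G.Walk b b),
    IsConformalBicycle G c₁ c₂ ∧ Even c₁.length ∧ Even c₂.length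

/-- A matching covered graph: connected, at least two vertices,
and every edge lies in some perfect matching. -/
def MatchingCovered (G : SimpleGraph V) [Fintype V] : Prop :=
  G.Connected ∧ 2 ≤ Fintype.card V ∧
    ∀ e ∈ G.edgeSet, ∃ M : G.Subgraph, M.IsPerfectMatching ∧ e ∈ M.edgeSet

/-- The cut ∂(S): edges of `G` with exactly one end in `S`. -/
def cutEdges (G : SimpleGraph V) (S : Set V) : Set (Sym2 V) :=
  {e | e ∈ G.edgeSet ∧ ∃ a b, e = s(a, b) ∧ a ∈ S ∧ b ∉ S}

/-- A tight cut: every perfect matching contains exactly one edge of ∂(S). -/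
def IsTightCut (G : SimpleGraph V) (S : Set V) : Prop :=
  ∀ M : G.Subgraph, M.IsPerfectMatching → ∃! e, e ∈ M.edgeSet ∧ e ∈ cutEdges G S

/-- A nontrivial cut: both shores have at least two vertices. -/
def IsNontrivialCut (S : Set V) : Prop := 2 ≤ S.ncard ∧ 2 ≤ Sᶜ.ncard

/-- The graph obtained from `G` by contracting the vertex set `S` to the
single new vertex `none`. -/
def contractSet (G : SimpleGraph V) (S : Set V) : SimpleGraph (Option {v : V // v ∉ S}) :=
  SimpleGraph.fromRel (fun a b =>
    (∃ u w : {v : V // v ∉ S}, a = some u ∧ b = some w ∧ G.Adj ↑u ↑w) ∨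
    (a = none ∧ ∃ w : {v : V // v ∉ S}, b = some w ∧ ∃ z ∈ S, G.Adj z ↑w))

namespace ContractAux

variable {G : SimpleGraph V} {S : Set V}

lemma adj_some {u w : {v : V // v ∉ S}} :
    (contractSet G S).Adj (some u) (some w) ↔ G.Adj ↑u ↑w := by
  constructor
  · rintro ⟨hne, (⟨u', w', h1, h2, h3⟩ | ⟨h1, _⟩) | (⟨u', w', h1, h2, h3⟩ | ⟨h1, _⟩)⟩
    · cases h1; cases h2; exact h3
    · exact absurd h1 (by simp)
    · cases h1; cases h2; exact h3.symm
    · exact absurd h1 (by simp)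
  · intro hadj
    have hne : u ≠ w := by rintro rfl; exact G.irrefl hadj
    refine ⟨by simpa using hne, Or.inl (Or.inl ⟨u, w, rfl, rfl, hadj⟩)⟩

lemma adj_none {w : {v : V // v ∉ S}} :
    (contractSet G S).Adj none (some w) ↔ ∃ z ∈ S, G.Adj z ↑w := by
  constructor
  · rintro ⟨hne, (⟨u', w', h1, h2, h3⟩ | ⟨h1, w', h2, z, hz, h3⟩) |
      (⟨u', w', h1, h2, h3⟩ | ⟨h1, w', h2, z, hz, h3⟩)⟩
    · exact absurd h1 (by simp)
    · cases h2; exact ⟨z, hz, h3⟩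
    · exact absurd h2 (by simp)
    · exact absurd h2 (by simp)
  · rintro ⟨z, hz, hadj⟩
    exact ⟨by simp, Or.inl (Or.inr ⟨rfl, w, rfl, z, hz, hadj⟩)⟩

open Classical in
/-- map from `V` to the contracted vertex set -/
noncomputable def cf (S : Set V) (v : V) : Option {v : V // v ∉ S} :=
  if h : v ∈ S then none else some ⟨v, h⟩

lemma cf_eq_none {v : V} : cf S v = none ↔ v ∈ S := by
  unfold cf
  split <;> simp_all

lemma cf_eq_some {v : V} {t : {v : V // v ∉ S}} : cf S v = some t ↔ v = ↑t := by
  unfold cf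
  split
  · constructor
    · intro h; exact nomatch h
    · rintro rfl; exact absurd ‹_› t.2
  · constructor
    · rintro h; injection h with h'; exact h'.symm ▸ rfl
    · rintro rfl; rfl

lemma cf_coe (t : {v : V // v ∉ S}) : cf S ↑t = some t := cf_eq_some.mpr rfl

/-- lifting a walk of the contracted graph avoiding `none` back to `G` -/
lemma lift_walk : ∀ {x y} (p : (contractSet G S).Walk x y), none ∉ p.support →
    ∀ {a b : {v : V // v ∉ S}}, x = some a → y = some b →
    ∃ q : G.Walk ↑a ↑b, q.length = p.length ∧ p.support = q.support.map (cf S) ∧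
      p.edges = q.edges.map (Sym2.map (cf S)) := by
  intro x y p
  induction p with
  | nil =>
    rintro _ a b rfl h2
    obtain rfl : a = b := Option.some_injective _ h2
    exact ⟨Walk.nil, by simp, by simp [cf_coe], by simp⟩
  | cons h p ih =>
    rename_i w1 w2 w3
    rintro hnone a b rfl rfl
    have hw2 : w2 ∈ (Walk.cons h p).support := by
      simp [Walk.support_cons, Walk.start_mem_support]
    match w2, h, p, hnone with
    | none, h, p, hnone => exact absurd hw2 (by simp_all)
    | some a2, h, p, hnone =>
      have hnone' : none ∉ p.support := fun hc => hnone (by simp [Walk.support_cons, hc])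
      obtain ⟨q, hq1, hq2, hq3⟩ := ih hnone' rfl rfl
      refine ⟨Walk.cons (adj_some.mp h) q, by simp [hq1], ?_, ?_⟩
      · simp [Walk.support_cons, hq2, cf_coe]
      · simp [Walk.edges_cons, hq3, cf_coe, Sym2.map_pair_eq]


lemma lift_support_not_mem_S {a b : {v : V // v ∉ S}} {p : (contractSet G S).Walk (some a) (some b)}
    (hp : none ∉ p.support) {q : G.Walk ↑a ↑b} (hq : p.support = q.support.map (cf S)) :
    ∀ x ∈ q.support, x ∉ S := by
  intro x hx hxS
  apply hp
  rw [hq]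
  have : cf S x = none := cf_eq_none.mpr hxS
  exact this ▸ List.mem_map_of_mem (f := cf S) hx

lemma lift_support_mem {a b : {v : V // v ∉ S}} {p : (contractSet G S).Walk (some a) (some b)}
    {q : G.Walk ↑a ↑b} (hq : p.support = q.support.map (cf S))
    (t : {v : V // v ∉ S}) : some t ∈ p.support ↔ (t : V) ∈ q.support := by
  rw [hq, List.mem_map]
  constructor
  · rintro ⟨x, hx, hfx⟩
    obtain rfl : x = ↑t := cf_eq_some.mp hfx
    exact hx
  · intro hx
    exact ⟨↑t, hx, cf_coe t⟩

lemma lift_cycle {a : {v : V // v ∉ S}} {p : (contractSet G S).Walk (some a) (some a)}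
    {q : G.Walk ↑a ↑a} (hlen : q.length = p.length) (hsup : p.support = q.support.map (cf S))
    (hedge : p.edges = q.edges.map (Sym2.map (cf S))) (hc : p.IsCycle) : q.IsCycle := by
  refine ⟨⟨⟨?_⟩, ?_⟩, ?_⟩
  · exact List.Nodup.of_map _ (hedge ▸ hc.edges_nodup)
  · intro hq
    have : q.length = 0 := by rw [hq]; rfl
    have h3 := hc.three_le_length
    omega
  · have := hc.support_nodup
    rw [hsup] at this
    have : (q.support.tail.map (cf S)).Nodup := by
      rwa [List.map_tail]
    exact List.Nodup.of_map _ this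

lemma end_mem_tail {W : Type*} {H : SimpleGraph W} :
    ∀ {u v : W} (p : H.Walk u v), ¬ p.Nil → v ∈ p.support.tail := by
  intro u v p hp
  cases p with
  | nil => exact absurd Walk.Nil.nil hp
  | cons h q => simp [Walk.support_cons, q.end_mem_support]

lemma mem_support_rotate_iff {W : Type*} [DecidableEq W] {H : SimpleGraph W} {u v x : W}
    (c : H.Walk v v) (hc : ¬ c.Nil) (h : u ∈ c.support) :
    x ∈ (c.rotate u h).support ↔ x ∈ c.support := by
  have hrot : ¬ (c.rotate u h).Nil := by
    rw [Walk.nil_iff_length_eq] at hc ⊢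
    rwa [show (c.rotate u h).length = c.length by
      unfold Walk.rotate
      rw [Walk.length_append, add_comm, ← Walk.length_append, Walk.take_spec]]
  have key : ∀ {w : W} (p : H.Walk w w), ¬ p.Nil → ∀ y, (y ∈ p.support ↔ y ∈ p.support.tail) := by
    intro w p hp y
    constructor
    · intro hy
      rw [Walk.support_eq_cons] at hy
      rcases List.mem_cons.mp hy with rfl | hy
      · exact end_mem_tail p hp
      · exact hy
    · intro hy
      rw [Walk.support_eq_cons]
      exact List.mem_cons_of_mem _ hy
  rw [key _ hrot x, key _ hc x]
  exact (Walk.support_rotate c u h).mem_iff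

lemma length_rotate {W : Type*} [DecidableEq W] {H : SimpleGraph W} {u v : W}
    (c : H.Walk v v) (h : u ∈ c.support) : (c.rotate u h).length = c.length := by
  unfold Walk.rotate
  rw [Walk.length_append, add_comm, ← Walk.length_append, Walk.take_spec]

lemma cycle_none_decomp (c : (contractSet G S).Walk none none) (hc : c.IsCycle) :
    ∃ (w1 w2 : {v : V // v ∉ S}) (p : (contractSet G S).Walk (some w1) (some w2)),
      w1 ≠ w2 ∧ (contractSet G S).Adj none (some w1) ∧ (contractSet G S).Adj none (some w2) ∧
      none ∉ p.support ∧ p.support.Nodup ∧ c.length = p.length + 2 ∧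
      (∀ x, x ∈ c.support ↔ x = none ∨ x ∈ p.support) := by
  have h3 := hc.three_le_length
  have hnil : ¬ c.Nil := by rw [Walk.nil_iff_length_eq]; omega
  clear h3
  have h3 := hc.three_le_length
  obtain ⟨v, h, q, rfl⟩ := Walk.not_nil_iff.mp hnil
  rw [Walk.length_cons] at h3
  match v, h, q, h3 with
  | none, h, q, h3 => exact absurd rfl h.ne
  | some w1, h, q, h3 =>
    have hqnil : ¬ q.reverse.Nil := by
      rw [Walk.nil_iff_length_eq, Walk.length_reverse]; omega
    obtain ⟨y, h2, r, hqr⟩ := Walk.not_nil_iff.mp hqnil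
    have hq : q = (Walk.cons h2 r).reverse := by rw [← hqr, Walk.reverse_reverse]
    match y, h2, r, hqr, hq with
    | none, h2, r, hqr, hq => exact absurd rfl h2.ne
    | some w2, h2, r, hqr, hq =>
      subst hq
      rw [Walk.reverse_cons] at *
      set p := r.reverse with hp
      have hsup : (Walk.cons h (p.append (Walk.cons h2.symm Walk.nil))).support
          = none :: (p.support ++ [none]) := by
        rw [Walk.support_cons, Walk.support_append, Walk.support_cons, Walk.support_nil]
        rfl
      have hnd : (p.support ++ [none]).Nodup := by
        have := hc.support_nodup
        rwa [hsup] at this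
      have hnonep : none ∉ p.support := by
        intro hmem
        exact (List.disjoint_of_nodup_append hnd) hmem (by simp)
      have hpnd : p.support.Nodup := (List.nodup_append.mp hnd).1
      have hlen2 : (Walk.cons h (p.append (Walk.cons h2.symm Walk.nil))).length
          = p.length + 2 := by
        simp [Walk.length_cons, Walk.length_append]
      have hne : w1 ≠ w2 := by
        rintro rfl
        have hplen : p.length ≠ 0 := by
          intro h0
          simp [Walk.length_append] at h3
          omega
        have hpnil : ¬ p.Nil := by rwa [Walk.nil_iff_length_eq]
        have : some w1 ∈ p.support.tail := end_mem_tail p hpnil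
        rw [Walk.support_eq_cons] at hpnd
        exact (List.nodup_cons.mp hpnd).1 this
      refine ⟨w1, w2, p, hne, h, h2, hnonep, hpnd, hlen2, ?_⟩
      intro x
      rw [hsup]
      simp only [List.mem_cons, List.mem_append, List.mem_singleton]
      tauto

section Partner

variable {G : SimpleGraph V}

lemma cutEdges_mem {S : Set V} {z w : V} (hz : z ∈ S) (hw : w ∉ S) (hadj : G.Adj z w) :
    s(z, w) ∈ cutEdges G S := ⟨G.mem_edgeSet.mpr hadj, z, w, rfl, hz, hw⟩

/-- in a perfect matching with unique cut edge `s(z,w)`, every vertex of `S` other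
than `z` is matched inside `S` -/
lemma tight_closure {S : Set V} (ht : IsTightCut G S) {Q : G.Subgraph}
    (hQ : Q.IsPerfectMatching) {z w : V} (hz : z ∈ S) (hw : w ∉ S) (hzw : Q.Adj z w) :
    ∀ v ∈ S, v ≠ z → ∀ y, Q.Adj v y → y ∈ S := by
  intro v hv hvz y hvy
  by_contra hyS
  obtain ⟨e, _, hu⟩ := ht Q hQ
  have h1 : s(z, w) = e := hu _ ⟨Subgraph.mem_edgeSet.mpr hzw, cutEdges_mem hz hw (Q.adj_sub hzw)⟩
  have h2 : s(v, y) = e := hu _ ⟨Subgraph.mem_edgeSet.mpr hvy, cutEdges_mem hv hyS (Q.adj_sub hvy)⟩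
  rcases Sym2.eq_iff.mp (h2.trans h1.symm) with ⟨rfl, rfl⟩ | ⟨rfl, rfl⟩
  · exact hvz rfl
  · exact hw hv

/-- The alternating path lemma: starting at `c`, alternately following `g` and `f`
inside `A`, one reaches `z2` by an even path whose removal leaves `A` `f`-closed. -/
lemma alt_path [Fintype V] (f g : V → V) (hfadj : ∀ x, G.Adj x (f x)) (hgadj : ∀ x, G.Adj x (g x))
    (hfinv : ∀ x, f (f x) = x) (hginv : ∀ x, g (g x) = x) {S : Set V} {z2 : V}
    (hgz2 : g z2 ∉ S) :
    ∀ (n : ℕ) (A : Set V), A.ncard ≤ n → A ⊆ S → ∀ c ∈ A, z2 ∈ A →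
      (∀ v ∈ A, v ≠ c → f v ∈ A) → (∀ v ∈ A, v ≠ z2 → g v ∈ A) → f c ∉ A →
      ∃ R : G.Walk c z2, Even R.length ∧ R.support.Nodup ∧ (∀ x ∈ R.support, x ∈ A) ∧
        (∀ v ∈ A, v ∉ R.support → f v ∈ A ∧ f v ∉ R.support) := by
  intro n
  induction n with
  | zero =>
    intro A hcard hAS c hc _ _ _ _
    have : A.ncard ≠ 0 := Set.ncard_ne_zero_of_mem hc A.toFinite
    omega
  | succ n ih =>
    intro A hcard hAS c hc hz2 H1 H2 H3
    by_cases hceq : c = z2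
    · subst hceq
      refine ⟨Walk.nil, by simp, by simp, by simpa using hc, ?_⟩
      intro v hv hvs
      have hvc : v ≠ c := by simpa [Walk.support_nil] using hvs
      refine ⟨H1 v hv hvc, ?_⟩
      simp only [Walk.support_nil, List.mem_singleton]
      intro hfv
      apply H3
      have hfc : f c = v := by rw [← hfv, hfinv]
      rw [hfc]; exact hv
    · obtain ⟨m, hm⟩ : ∃ x, g c = x := ⟨_, rfl⟩
      obtain ⟨c', hc'⟩ : ∃ x, f m = x := ⟨_, rfl⟩
      have hadj_cm : G.Adj c m := hm ▸ hgadj c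
      have hadj_mc' : G.Adj m c' := hc' ▸ hfadj m
      have hgm : g m = c := by rw [← hm, hginv]
      have hfc' : f c' = m := by rw [← hc', hfinv]
      have hmA : m ∈ A := hm ▸ H2 c hc hceq
      have hmc : m ≠ c := fun h => G.irrefl (h ▸ hadj_cm)
      have hmz2 : m ≠ z2 := by
        rintro rfl
        apply hgz2
        rw [hgm]; exact hAS hc
      have hc'A : c' ∈ A := hc' ▸ H1 m hmA hmc
      have hc'm : c' ≠ m := fun h => G.irrefl (h ▸ hadj_mc')
      have hc'c : c' ≠ c := by
        intro h
        apply H3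
        have : f c = m := by rw [← h, hfc']
        rw [this]; exact hmA
      have hcard' : (A \ ({c, m} : Set V)).ncard ≤ n := by
        have h1 : A \ ({c, m} : Set V) ⊆ A \ {c} := by
          intro x hx
          exact ⟨hx.1, fun hxc => hx.2 (Or.inl hxc)⟩
        have h2 := Set.ncard_le_ncard h1 (A \ ({c} : Set V)).toFinite
        have h3 : (A \ ({c} : Set V)).ncard = A.ncard - 1 :=
          Set.ncard_diff_singleton_of_mem hc
        omega
      have hnotmem : ∀ x, x ∈ A → x ≠ c → x ≠ m → x ∈ A \ ({c, m} : Set V) := by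
        intro x hx h1 h2
        exact ⟨hx, by simp [h1, h2]⟩
      have hc'A' : c' ∈ A \ ({c, m} : Set V) := hnotmem c' hc'A hc'c hc'm
      have hz2A' : z2 ∈ A \ ({c, m} : Set V) :=
        hnotmem z2 hz2 (fun h => hceq h.symm) (fun h => hmz2 h.symm)
      have H1' : ∀ v ∈ A \ ({c, m} : Set V), v ≠ c' → f v ∈ A \ ({c, m} : Set V) := by
        rintro v ⟨hvA, hv2⟩ hvc'
        simp only [Set.mem_insert_iff, Set.mem_singleton_iff, not_or] at hv2
        refine hnotmem _ (H1 v hvA hv2.1) ?_ ?_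
        · intro hfvc
          apply H3
          have : f c = v := by rw [← hfvc, hfinv]
          rw [this]; exact hvA
        · intro hfvm
          apply hvc'
          rw [← hfinv v, hfvm, hc']
      have H2' : ∀ v ∈ A \ ({c, m} : Set V), v ≠ z2 → g v ∈ A \ ({c, m} : Set V) := by
        rintro v ⟨hvA, hv2⟩ hvz2
        simp only [Set.mem_insert_iff, Set.mem_singleton_iff, not_or] at hv2
        refine hnotmem _ (H2 v hvA hvz2) ?_ ?_
        · intro hgvc
          apply hv2.2
          rw [← hginv v, hgvc, hm]
        · intro hgvm
          apply hv2.1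
          rw [← hginv v, hgvm, hgm]
      have H3' : f c' ∉ A \ ({c, m} : Set V) := by
        rw [hfc']
        intro hmem
        exact hmem.2 (Or.inr rfl)
      obtain ⟨R', hR'even, hR'nd, hR'sub, hR'cl⟩ :=
        ih (A \ ({c, m} : Set V)) hcard' (Set.diff_subset.trans hAS) c' hc'A' hz2A' H1' H2' H3'
      have hR'A : ∀ x ∈ R'.support, x ∈ A ∧ x ≠ c ∧ x ≠ m := by
        intro x hx
        obtain ⟨h1, h2⟩ := hR'sub x hx
        simp only [Set.mem_insert_iff, Set.mem_singleton_iff, not_or] at h2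
        exact ⟨h1, h2⟩
      refine ⟨Walk.cons hadj_cm (Walk.cons hadj_mc' R'), ?_, ?_, ?_, ?_⟩
      · simpa [Walk.length_cons, Nat.even_add_one, parity_simps] using hR'even
      · simp only [Walk.support_cons, List.nodup_cons]
        refine ⟨?_, ?_, hR'nd⟩
        · simp only [List.mem_cons, not_or]
          exact ⟨Ne.symm hmc, fun hcs => (hR'A c hcs).2.1 rfl⟩
        · exact fun hms => (hR'A m hms).2.2 rfl
      · intro x hx
        simp only [Walk.support_cons, List.mem_cons] at hx
        rcases hx with rfl | rfl | hx
        · exact hc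
        · exact hmA
        · exact (hR'A x hx).1
      · intro v hv hvs
        simp only [Walk.support_cons, List.mem_cons, not_or] at hvs
        obtain ⟨hvc, hvm, hvR'⟩ := hvs
        obtain ⟨hfv1, hfv2⟩ := hR'cl v (hnotmem v hv hvc hvm) hvR'
        refine ⟨hfv1.1, ?_⟩
        simp only [Walk.support_cons, List.mem_cons, not_or]
        refine ⟨?_, ?_, hfv2⟩
        · intro hfvc
          apply H3
          have : f c = v := by rw [← hfvc, hfinv]
          rw [this]; exact hv
        · intro hfvm
          have : v = c' := by rw [← hfinv v, hfvm, hc']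
          exact hvR' (this ▸ R'.start_mem_support)

end Partner

lemma partner_spec {Q : G.Subgraph} (hQ : Q.IsPerfectMatching) :
    ∃ f : V → V, (∀ v, Q.Adj v (f v)) ∧ (∀ v w, Q.Adj v w → w = f v) ∧ (∀ v, f (f v) = v) := by
  have h := Subgraph.isPerfectMatching_iff.mp hQ
  choose f hf using h
  refine ⟨f, fun v => (hf v).1, fun v w hw => (hf v).2 w hw, fun v => ?_⟩
  exact ((hf (f v)).2 v ((hf v).1.symm)).symm

lemma caseB [Fintype V] {G : SimpleGraph V} {S : Set V}
    (hmc : MatchingCovered G) (ht : IsTightCut G S)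
    {a b : Option {v : V // v ∉ S}} (c1 : (contractSet G S).Walk a a)
    (c2 : (contractSet G S).Walk b b)
    (hc1 : c1.IsCycle) (hc2 : c2.IsCycle) (hdisj : ∀ x ∈ c1.support, x ∉ c2.support)
    (M' : (contractSet G S).Subgraph) (hM' : M'.IsMatching)
    (hverts : M'.verts = {x | x ∉ c1.support ∧ x ∉ c2.support})
    (he1 : Even c1.length) (he2 : Even c2.length)
    (hnone : none ∈ c1.support) : HasEvenConformalBicycle G := by
  classical
  -- rotate c1 to be based at `none` and decompose
  have hc1nil : ¬ c1.Nil := by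
    rw [Walk.nil_iff_length_eq]; have := hc1.three_le_length; omega
  have hc1r := hc1.rotate hnone
  have hmemrot : ∀ x, x ∈ (c1.rotate none hnone).support ↔ x ∈ c1.support :=
    fun x => mem_support_rotate_iff c1 hc1nil hnone
  obtain ⟨w1, w2, pm, hne, hadj1, hadj2, hnonepm, hpmnd, hlenr, hmem⟩ :=
    cycle_none_decomp (c1.rotate none hnone) hc1r
  obtain ⟨z1, hz1S, hz1adj⟩ := adj_none.mp hadj1
  obtain ⟨z2, hz2S, hz2adj⟩ := adj_none.mp hadj2
  -- lift the inner part of c1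
  obtain ⟨P, hPlen, hPsup, hPedge⟩ := lift_walk pm hnonepm rfl rfl
  have hPnotS : ∀ x ∈ P.support, x ∉ S := lift_support_not_mem_S hnonepm hPsup
  have hPnd : P.support.Nodup := List.Nodup.of_map _ (hPsup ▸ hpmnd)
  -- lift c2
  have hnonec2 : none ∉ c2.support := hdisj none hnone
  obtain ⟨b', rfl⟩ : ∃ b', b = some b' := by
    cases b with
    | none => exact absurd c2.start_mem_support hnonec2
    | some b' => exact ⟨b', rfl⟩
  obtain ⟨C2, hC2len, hC2sup, hC2edge⟩ := lift_walk c2 hnonec2 rfl rfl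
  have hC2cyc := lift_cycle hC2len hC2sup hC2edge hc2
  have hC2notS : ∀ x ∈ C2.support, x ∉ S := lift_support_not_mem_S hnonec2 hC2sup
  -- perfect matchings through the two cut edges
  obtain ⟨Q1, hQ1, hQ1e⟩ := hmc.2.2 s(z1, ↑w1) (G.mem_edgeSet.mpr hz1adj)
  obtain ⟨Q2, hQ2, hQ2e⟩ := hmc.2.2 s(z2, ↑w2) (G.mem_edgeSet.mpr hz2adj)
  have hQ1adj : Q1.Adj z1 ↑w1 := Subgraph.mem_edgeSet.mp hQ1e
  have hQ2adj : Q2.Adj z2 ↑w2 := Subgraph.mem_edgeSet.mp hQ2e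
  obtain ⟨f, hf, hfu, hfinv⟩ := partner_spec hQ1
  obtain ⟨g, hg, hgu, hginv⟩ := partner_spec hQ2
  have hfz1 : f z1 = ↑w1 := (hfu _ _ hQ1adj).symm
  have hgz2 : g z2 = ↑w2 := (hgu _ _ hQ2adj).symm
  have H1 : ∀ v ∈ S, v ≠ z1 → f v ∈ S := fun v hv hvz =>
    tight_closure ht hQ1 hz1S w1.2 hQ1adj v hv hvz (f v) (hf v)
  have H2 : ∀ v ∈ S, v ≠ z2 → g v ∈ S := fun v hv hvz =>
    tight_closure ht hQ2 hz2S w2.2 hQ2adj v hv hvz (g v) (hg v)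
  have H3 : f z1 ∉ S := by rw [hfz1]; exact w1.2
  have hgz2S : g z2 ∉ S := by rw [hgz2]; exact w2.2
  -- the alternating path inside S
  obtain ⟨R, hReven, hRnd, hRS, hRcl⟩ :=
    alt_path f g (fun x => Q1.adj_sub (hf x)) (fun x => Q2.adj_sub (hg x)) hfinv hginv hgz2S
      S.ncard S le_rfl subset_rfl z1 hz1S hz2S H1 H2 H3
  -- build the big cycle D
  have hadjw2z2 : G.Adj ↑w2 z2 := hz2adj.symm
  refine ⟨z1, ↑b', Walk.cons hz1adj (P.append (Walk.cons hadjw2z2 R.reverse)), C2, ?_, ?_, ?_⟩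
  rotate_left
  · -- Even length of D
    have hD : (Walk.cons hz1adj (P.append (Walk.cons hadjw2z2 R.reverse))).length
        = P.length + R.length + 2 := by
      simp [Walk.length_cons, Walk.length_append, Walk.length_reverse]
      omega
    rw [hD]
    have hc1rlen : (c1.rotate none hnone).length = c1.length := length_rotate c1 hnone
    have hpm_even : Even pm.length := by
      have : Even (c1.rotate none hnone).length := hc1rlen ▸ he1
      rw [hlenr] at this
      rcases this with ⟨k, hk⟩
      exact ⟨k - 1, by omega⟩
    rw [hPlen]
    rcases hpm_even with ⟨k, hk⟩
    rcases hReven with ⟨l, hl⟩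
    exact ⟨k + l + 1, by omega⟩
  · rwa [hC2len]
  -- the conformal bicycle structure
  set D := Walk.cons hz1adj (P.append (Walk.cons hadjw2z2 R.reverse)) with hD
  have hDsup : D.support = z1 :: (P.support ++ R.reverse.support) := by
    rw [hD, Walk.support_cons, Walk.support_append, Walk.support_cons]
    rfl
  have hDmem : ∀ x, x ∈ D.support ↔ x ∈ P.support ∨ x ∈ R.support := by
    intro x
    rw [hDsup]
    simp only [List.mem_cons, List.mem_append, Walk.support_reverse, List.mem_reverse]
    constructor
    · rintro (rfl | h | h)
      · exact Or.inr R.start_mem_support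
      · exact Or.inl h
      · exact Or.inr h
    · rintro (h | h)
      · exact Or.inr (Or.inl h)
      · exact Or.inr (Or.inr h)
  -- membership correspondences
  have hpm_mem : ∀ (x : V) (hx : x ∉ S), (↑(⟨x, hx⟩ : {v : V // v ∉ S}) : V) ∈ P.support ↔
      some (⟨x, hx⟩ : {v : V // v ∉ S}) ∈ c1.support := by
    intro x hx
    rw [← lift_support_mem hPsup, ← hmemrot, hmem]
    simp
  have hC2_mem : ∀ (x : V) (hx : x ∉ S), (↑(⟨x, hx⟩ : {v : V // v ∉ S}) : V) ∈ C2.support ↔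
      some (⟨x, hx⟩ : {v : V // v ∉ S}) ∈ c2.support := by
    intro x hx
    rw [← lift_support_mem hC2sup]
  have hdisjD : ∀ x ∈ D.support, x ∉ C2.support := by
    intro x hx hxC2
    have hxS : x ∉ S := hC2notS x hxC2
    rcases (hDmem x).mp hx with hP | hR
    · have h1 : some (⟨x, hxS⟩ : {v : V // v ∉ S}) ∈ c1.support := (hpm_mem x hxS).mp hP
      have h2 : some (⟨x, hxS⟩ : {v : V // v ∉ S}) ∈ c2.support := (hC2_mem x hxS).mp hxC2
      exact hdisj _ h1 h2
    · exact hxS (hRS x hR)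
  -- D is a cycle
  have hDcyc : D.IsCycle := by
    refine ⟨⟨⟨?_⟩, by rw [hD]; exact fun hcon => nomatch hcon⟩, ?_⟩
    · -- edges nodup
      have hDedges : D.edges = s(z1, ↑w1) :: (P.edges ++ (s(↑w2, z2) :: R.reverse.edges)) := by
        rw [hD, Walk.edges_cons, Walk.edges_append, Walk.edges_cons]
      rw [hDedges]
      have hPe : ∀ e ∈ P.edges, ∀ x ∈ e, x ∉ S := by
        intro e he
        induction e with
        | h x y =>
          intro t ht
          rcases Sym2.mem_iff.mp ht with rfl | rfl
          · exact hPnotS _ (Walk.fst_mem_support_of_mem_edges P he)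
          · exact hPnotS _ (Walk.snd_mem_support_of_mem_edges P he)
      have hRe : ∀ e ∈ R.reverse.edges, ∀ x ∈ e, x ∈ S := by
        intro e he
        rw [Walk.edges_reverse, List.mem_reverse] at he
        induction e with
        | h x y =>
          intro t ht
          rcases Sym2.mem_iff.mp ht with rfl | rfl
          · exact hRS _ (Walk.fst_mem_support_of_mem_edges R he)
          · exact hRS _ (Walk.snd_mem_support_of_mem_edges R he)
      rw [List.nodup_cons]
      constructor
      · -- s(z1,w1) not in the rest
        rw [List.mem_append, List.mem_cons]
        rintro (he | he | he)
        · exact hPe _ he z1 (by simp) hz1S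
        · rcases Sym2.eq_iff.mp he with ⟨rfl, h2⟩ | ⟨h1, h2⟩
          · exact w2.2 hz1S
          · exact hne (Subtype.coe_injective h2)
        · exact w1.2 (hRe _ he ↑w1 (by simp))
      · refine List.Nodup.append ?_ ?_ ?_
        · exact (Walk.IsPath.mk' hPnd).edges_nodup
        · rw [List.nodup_cons]
          refine ⟨fun he => w2.2 (hRe _ he ↑w2 (by simp)), ?_⟩
          rw [Walk.edges_reverse, List.nodup_reverse]
          exact (Walk.IsPath.mk' hRnd).edges_nodup
        · intro e heP heR
          rw [List.mem_cons] at heR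
          rcases heR with rfl | heR
          · exact hPe _ heP z2 (by simp) hz2S
          · induction e with
            | h x y => exact hPe _ heP x (by simp) (hRe _ heR x (by simp))
    · -- support tail nodup
      have : D.support.tail = P.support ++ R.reverse.support := by rw [hDsup]; rfl
      rw [this]
      refine List.Nodup.append hPnd ?_ ?_
      · rw [Walk.support_reverse, List.nodup_reverse]; exact hRnd
      · intro x hxP hxR
        rw [Walk.support_reverse, List.mem_reverse] at hxR
        exact hPnotS x hxP (hRS x hxR)
  -- the matching on the complement
  refine ⟨hDcyc, hC2cyc, hdisjD, ?_⟩
  refine ⟨{ verts := {v | v ∉ D.support ∧ v ∉ C2.support},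
            Adj := fun x y => (x ∉ D.support ∧ x ∉ C2.support) ∧
              (y ∉ D.support ∧ y ∉ C2.support) ∧
              ((∃ u w : {v : V // v ∉ S}, x = ↑u ∧ y = ↑w ∧ M'.Adj (some u) (some w)) ∨
                (x ∈ S ∧ y ∈ S ∧ Q1.Adj x y)),
            adj_sub := ?_, edge_vert := ?_, symm := ?_ }, ?_, rfl⟩
  · rintro v w ⟨_, _, (⟨u, u', rfl, rfl, hMadj⟩ | ⟨_, _, hq⟩)⟩
    · exact adj_some.mp (M'.adj_sub hMadj)
    · exact Q1.adj_sub hq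
  · rintro v w ⟨h1, _, _⟩; exact h1
  · constructor; rintro v w ⟨h1, h2, h3⟩
    refine ⟨h2, h1, ?_⟩
    rcases h3 with ⟨u, u', rfl, rfl, hMadj⟩ | ⟨hs1, hs2, hq⟩
    · exact Or.inl ⟨u', u, rfl, rfl, hMadj.symm⟩
    · exact Or.inr ⟨hs2, hs1, hq.symm⟩
  · -- IsMatching
    rintro v ⟨hvD, hvC2⟩
    by_cases hvS : v ∈ S
    · -- v ∈ S : matched by Q1
      have hvR : v ∉ R.support := fun h => hvD ((hDmem v).mpr (Or.inr h))
      obtain ⟨hfvS, hfvR⟩ := hRcl v hvS hvR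
      have hfvD : f v ∉ D.support := by
        intro hmemD
        rcases (hDmem _).mp hmemD with hP | hR
        · exact hPnotS _ hP hfvS
        · exact hfvR hR
      have hfvC2 : f v ∉ C2.support := fun h => hC2notS _ h hfvS
      refine ⟨f v, ⟨⟨hvD, hvC2⟩, ⟨hfvD, hfvC2⟩, Or.inr ⟨hvS, hfvS, hf v⟩⟩, ?_⟩
      rintro y ⟨_, _, (⟨u, u', rfl, rfl, _⟩ | ⟨_, _, hq⟩)⟩
      · exact absurd hvS u.2
      · exact hfu v y hq
    · -- v ∉ S : matched by (lifted) M'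
      have hvP : v ∉ P.support := fun h => hvD ((hDmem v).mpr (Or.inl h))
      have hv1 : some (⟨v, hvS⟩ : {v : V // v ∉ S}) ∉ c1.support :=
        fun h => hvP ((hpm_mem v hvS).mpr h)
      have hv2 : some (⟨v, hvS⟩ : {v : V // v ∉ S}) ∉ c2.support :=
        fun h => hvC2 ((hC2_mem v hvS).mpr h)
      have hvM : some (⟨v, hvS⟩ : {v : V // v ∉ S}) ∈ M'.verts := by
        rw [hverts]; exact ⟨hv1, hv2⟩
      obtain ⟨y, hy, hyu⟩ := hM' hvM
      obtain ⟨u, rfl⟩ : ∃ u, y = some u := by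
        cases hyy : y with
        | none =>
          subst hyy
          have : none ∈ M'.verts := M'.edge_vert hy.symm
          rw [hverts] at this
          exact absurd hnone this.1
        | some u => exact ⟨u, rfl⟩
      have huM : some u ∈ M'.verts := M'.edge_vert hy.symm
      rw [hverts] at huM
      have huD : (↑u : V) ∉ D.support := by
        intro hmemD
        rcases (hDmem _).mp hmemD with hP | hR
        · exact huM.1 ((hpm_mem ↑u u.2).mp (by simpa using hP))
        · exact u.2 (hRS _ hR)
      have huC2 : (↑u : V) ∉ C2.support := by
        intro hmemC
        exact huM.2 ((hC2_mem ↑u u.2).mp (by simpa using hmemC))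
      refine ⟨↑u, ⟨⟨hvD, hvC2⟩, ⟨huD, huC2⟩, Or.inl ⟨⟨v, hvS⟩, u, rfl, rfl, hy⟩⟩, ?_⟩
      rintro y' ⟨_, _, (⟨u0, u0', hx0, rfl, hM0⟩ | ⟨hs1, _, _⟩)⟩
      · have : u0 = ⟨v, hvS⟩ := Subtype.ext hx0.symm
        subst this
        have := hyu (some u0') hM0
        injection this with h'
        rw [h']
      · exact absurd hs1 hvS

lemma caseA [Fintype V] {G : SimpleGraph V} {S : Set V}
    (hmc : MatchingCovered G) (ht : IsTightCut G S)
    {a b : Option {v : V // v ∉ S}} (c1 : (contractSet G S).Walk a a)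
    (c2 : (contractSet G S).Walk b b)
    (hc1 : c1.IsCycle) (hc2 : c2.IsCycle) (hdisj : ∀ x ∈ c1.support, x ∉ c2.support)
    (M' : (contractSet G S).Subgraph) (hM' : M'.IsMatching)
    (hverts : M'.verts = {x | x ∉ c1.support ∧ x ∉ c2.support})
    (he1 : Even c1.length) (he2 : Even c2.length)
    (hn1 : none ∉ c1.support) (hn2 : none ∉ c2.support) : HasEvenConformalBicycle G := by
  classical
  obtain ⟨a', rfl⟩ : ∃ a', a = some a' := by
    cases a with
    | none => exact absurd c1.start_mem_support hn1
    | some a' => exact ⟨a', rfl⟩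
  obtain ⟨b', rfl⟩ : ∃ b', b = some b' := by
    cases b with
    | none => exact absurd c2.start_mem_support hn2
    | some b' => exact ⟨b', rfl⟩
  obtain ⟨C1, hC1len, hC1sup, hC1edge⟩ := lift_walk c1 hn1 rfl rfl
  obtain ⟨C2, hC2len, hC2sup, hC2edge⟩ := lift_walk c2 hn2 rfl rfl
  have hC1cyc := lift_cycle hC1len hC1sup hC1edge hc1
  have hC2cyc := lift_cycle hC2len hC2sup hC2edge hc2
  have hC1notS : ∀ x ∈ C1.support, x ∉ S := lift_support_not_mem_S hn1 hC1sup
  have hC2notS : ∀ x ∈ C2.support, x ∉ S := lift_support_not_mem_S hn2 hC2sup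
  have hC1_mem : ∀ (x : V) (hx : x ∉ S), x ∈ C1.support ↔
      some (⟨x, hx⟩ : {v : V // v ∉ S}) ∈ c1.support := by
    intro x hx; exact (lift_support_mem hC1sup ⟨x, hx⟩).symm
  have hC2_mem : ∀ (x : V) (hx : x ∉ S), x ∈ C2.support ↔
      some (⟨x, hx⟩ : {v : V // v ∉ S}) ∈ c2.support := by
    intro x hx; exact (lift_support_mem hC2sup ⟨x, hx⟩).symm
  -- the contracted vertex is matched by M'
  have hnoneM : none ∈ M'.verts := by rw [hverts]; exact ⟨hn1, hn2⟩
  obtain ⟨y, hy, hyu⟩ := hM' hnoneM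
  obtain ⟨w, rfl⟩ : ∃ w, y = some w := by
    cases y with
    | none => exact absurd (M'.adj_sub hy) (contractSet G S).irrefl
    | some w => exact ⟨w, rfl⟩
  obtain ⟨z, hzS, hzadj⟩ := adj_none.mp (M'.adj_sub hy)
  have hwM : some w ∈ M'.verts := M'.edge_vert hy.symm
  have hw12 : some w ∉ c1.support ∧ some w ∉ c2.support := by rwa [hverts] at hwM
  obtain ⟨Q, hQ, hQe⟩ := hmc.2.2 s(z, ↑w) (G.mem_edgeSet.mpr hzadj)
  have hQadj : Q.Adj z ↑w := Subgraph.mem_edgeSet.mp hQe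
  obtain ⟨f, hf, hfu, hfinv⟩ := partner_spec hQ
  have hfz : f z = ↑w := (hfu _ _ hQadj).symm
  have Hcl : ∀ v ∈ S, v ≠ z → f v ∈ S := fun v hv hvz =>
    tight_closure ht hQ hzS w.2 hQadj v hv hvz (f v) (hf v)
  have Hclz : ∀ v ∈ S, v ≠ z → f v ≠ z := by
    intro v hv hvz hfvz
    have : v = ↑w := by rw [← hfinv v, hfvz, hfz]
    rw [this] at hv
    exact w.2 hv
  have hdisjC : ∀ x ∈ C1.support, x ∉ C2.support := by
    intro x hx1 hx2
    have hxS : x ∉ S := hC1notS x hx1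
    exact hdisj _ ((hC1_mem x hxS).mp hx1) ((hC2_mem x hxS).mp hx2)
  refine ⟨↑a', ↑b', C1, C2, ⟨hC1cyc, hC2cyc, hdisjC, ?_⟩, by rwa [hC1len], by rwa [hC2len]⟩
  refine ⟨{ verts := {v | v ∉ C1.support ∧ v ∉ C2.support},
            Adj := fun x y => (x ∉ C1.support ∧ x ∉ C2.support) ∧
              (y ∉ C1.support ∧ y ∉ C2.support) ∧
              ((∃ u u' : {v : V // v ∉ S}, x = ↑u ∧ y = ↑u' ∧ M'.Adj (some u) (some u')) ∨
                (x = z ∧ y = ↑w) ∨ (x = ↑w ∧ y = z) ∨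
                (x ∈ S ∧ y ∈ S ∧ x ≠ z ∧ y ≠ z ∧ Q.Adj x y)),
            adj_sub := ?_, edge_vert := ?_, symm := ?_ }, ?_, rfl⟩
  · rintro v u ⟨_, _, (⟨u0, u0', rfl, rfl, hM0⟩ | ⟨rfl, rfl⟩ | ⟨rfl, rfl⟩ | ⟨_, _, _, _, hq⟩)⟩
    · exact adj_some.mp (M'.adj_sub hM0)
    · exact hzadj
    · exact hzadj.symm
    · exact Q.adj_sub hq
  · rintro v u ⟨h1, _, _⟩; exact h1
  · constructor; rintro v u ⟨h1, h2, h3⟩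
    refine ⟨h2, h1, ?_⟩
    rcases h3 with ⟨u0, u0', rfl, rfl, hM0⟩ | ⟨rfl, rfl⟩ | ⟨rfl, rfl⟩ | ⟨q1, q2, q3, q4, hq⟩
    · exact Or.inl ⟨u0', u0, rfl, rfl, hM0.symm⟩
    · exact Or.inr (Or.inr (Or.inl ⟨rfl, rfl⟩))
    · exact Or.inr (Or.inl ⟨rfl, rfl⟩)
    · exact Or.inr (Or.inr (Or.inr ⟨q2, q1, q4, q3, hq.symm⟩))
  · -- IsMatching
    rintro v ⟨hv1, hv2⟩
    have hSverts : ∀ x ∈ S, x ∉ C1.support ∧ x ∉ C2.support :=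
      fun x hx => ⟨fun hc => hC1notS _ hc hx, fun hc => hC2notS _ hc hx⟩
    have hwverts : (↑w : V) ∉ C1.support ∧ (↑w : V) ∉ C2.support :=
      ⟨fun hc => hw12.1 ((hC1_mem ↑w w.2).mp hc), fun hc => hw12.2 ((hC2_mem ↑w w.2).mp hc)⟩
    by_cases hvS : v ∈ S
    · by_cases hvz : v = z
      · subst hvz
        refine ⟨↑w, ⟨⟨hv1, hv2⟩, hwverts, Or.inr (Or.inl ⟨rfl, rfl⟩)⟩, ?_⟩
        rintro y ⟨_, _, (⟨u0, u0', hx, rfl, _⟩ | ⟨_, rfl⟩ | ⟨hx, _⟩ | ⟨_, _, hx, _, _⟩)⟩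
        · exact absurd (hx ▸ hvS) u0.2
        · rfl
        · exact absurd (hx ▸ hvS) w.2
        · exact absurd rfl hx
      · refine ⟨f v, ⟨⟨hv1, hv2⟩, hSverts (f v) (Hcl v hvS hvz), Or.inr (Or.inr (Or.inr
          ⟨hvS, Hcl v hvS hvz, hvz, Hclz v hvS hvz, hf v⟩))⟩, ?_⟩
        rintro y ⟨_, _, (⟨u0, u0', hx, rfl, _⟩ | ⟨hx, _⟩ | ⟨hx, _⟩ | ⟨_, _, _, _, hq⟩)⟩
        · exact absurd (hx ▸ hvS) u0.2
        · exact absurd hx hvz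
        · exact absurd (hx ▸ hvS) w.2
        · exact hfu v y hq
    · by_cases hvw : v = ↑w
      · subst hvw
        refine ⟨z, ⟨⟨hv1, hv2⟩, hSverts z hzS, Or.inr (Or.inr (Or.inl ⟨rfl, rfl⟩))⟩, ?_⟩
        rintro y ⟨_, _, (⟨u0, u0', hx, rfl, hM0⟩ | ⟨hx, _⟩ | ⟨_, rfl⟩ | ⟨hx, _, _, _, _⟩)⟩
        · exfalso
          have hu0 : u0 = w := Subtype.ext hx.symm
          subst hu0
          obtain ⟨y0, _, hy0u⟩ := hM' hwM
          have e1 := hy0u none hy.symm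
          have e2 := hy0u (some u0') hM0
          rw [← e1] at e2
          exact nomatch e2
        · exact absurd (hx ▸ hzS) hvS
        · rfl
        · exact absurd hx hvS
      · have hv1' : some (⟨v, hvS⟩ : {v : V // v ∉ S}) ∉ c1.support :=
          fun hc => hv1 ((hC1_mem v hvS).mpr hc)
        have hv2' : some (⟨v, hvS⟩ : {v : V // v ∉ S}) ∉ c2.support :=
          fun hc => hv2 ((hC2_mem v hvS).mpr hc)
        have hvM : some (⟨v, hvS⟩ : {v : V // v ∉ S}) ∈ M'.verts := by
          rw [hverts]; exact ⟨hv1', hv2'⟩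
        obtain ⟨y0, hy0, hy0u⟩ := hM' hvM
        obtain ⟨u, rfl⟩ : ∃ u, y0 = some u := by
          cases y0 with
          | none =>
            exfalso
            have := hyu (some ⟨v, hvS⟩) hy0.symm
            injection this with h'
            exact hvw (congrArg Subtype.val h')
          | some u => exact ⟨u, rfl⟩
        have huM : some u ∈ M'.verts := M'.edge_vert hy0.symm
        rw [hverts] at huM
        have huverts : (↑u : V) ∉ C1.support ∧ (↑u : V) ∉ C2.support :=
          ⟨fun hc => huM.1 ((hC1_mem ↑u u.2).mp hc), fun hc => huM.2 ((hC2_mem ↑u u.2).mp hc)⟩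
        refine ⟨↑u, ⟨⟨hv1, hv2⟩, huverts, Or.inl ⟨⟨v, hvS⟩, u, rfl, rfl, hy0⟩⟩, ?_⟩
        rintro y' ⟨_, _, (⟨u0, u0', hx0, rfl, hM0⟩ | ⟨hx, _⟩ | ⟨hx, _⟩ | ⟨hx, _, _, _, _⟩)⟩
        · have : u0 = ⟨v, hvS⟩ := Subtype.ext hx0.symm
          subst this
          have := hy0u (some u0') hM0
          injection this with h'
          rw [h']
        · exact absurd (hx ▸ hzS) hvS
        · exact absurd hx hvw
        · exact absurd hx hvS

end ContractAux

/-- Contracting a shore of a nontrivial tight cut preserves the absence of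
even conformal bicycles. -/
theorem contract_tight_cut_no_even_conformal_bicycle [Fintype V]
    (G : SimpleGraph V) (S : Set V)
    (hmc : MatchingCovered G) (hnt : IsNontrivialCut S) (ht : IsTightCut G S)
    (h : ¬ HasEvenConformalBicycle G) :
    ¬ HasEvenConformalBicycle (contractSet G S) := by
  intro hK
  obtain ⟨a, b, c1, c2, ⟨hc1, hc2, hdisj, M', hM', hverts⟩, he1, he2⟩ := hK
  by_cases h1 : none ∈ c1.support
  · exact h (ContractAux.caseB hmc ht c1 c2 hc1 hc2 hdisj M' hM' hverts he1 he2 h1)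
  · by_cases h2 : none ∈ c2.support
    · have hdisj' : ∀ x ∈ c2.support, x ∉ c1.support := fun x hx hx1 => hdisj x hx1 hx
      have hverts' : M'.verts = {x | x ∉ c2.support ∧ x ∉ c1.support} := by
        rw [hverts]; ext x; exact and_comm
      exact h (ContractAux.caseB hmc ht c2 c1 hc2 hc1 hdisj' M' hM' hverts' he2 he1 h2)
    · exact h (ContractAux.caseA hmc ht c1 c2 hc1 hc2 hdisj M' hM' hverts he1 he2 h1 h2)
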